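/- Fixed-point property and boundedness of the minimal robust positively invariant set: Let F ∈ ℝ^{n×n} admit constants C ≥ 1 and r ∈ (0,1) with ‖F^k‖ ≤ C r^k for all k ≥ 0, and let Ω₁ ⊆ ℝ^n be nonempty and bounded. Define Ω_∞ := { ∑_{k=0}^{∞} F^k w_k : (w_k)_{k≥0} a sequence with w_k ∈ Ω₁ for all k }, where each series converges absolutely in ℝ^n. Then Ω_∞ is a nonempty bounded set and satisfies the fixed-point equation F·Ω_∞ + Ω₁ = Ω_∞. -/

import Mathlib

open Matrix Pointwise

/-- Matrix–vector action on Euclidean space. -/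
noncomputable def mulVecE {n : ℕ} (G : Matrix (Fin n) (Fin n) ℝ)
    (v : EuclideanSpace ℝ (Fin n)) : EuclideanSpace ℝ (Fin n) := WithLp.toLp 2 (G *ᵥ v)

/-- Operator norm of a real matrix acting on Euclidean space. -/
noncomputable def opNorm {n : ℕ} (F : Matrix (Fin n) (Fin n) ℝ) : ℝ :=
  ‖Matrix.toEuclideanCLM (𝕜 := ℝ) (n := Fin n) F‖

lemma mulVecE_eq {n : ℕ} (G : Matrix (Fin n) (Fin n) ℝ) (v : EuclideanSpace ℝ (Fin n)) :
    mulVecE G v = Matrix.toEuclideanCLM (𝕜 := ℝ) G v := rfl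

lemma norm_mulVecE_le {n : ℕ} (G : Matrix (Fin n) (Fin n) ℝ) (v : EuclideanSpace ℝ (Fin n)) :
    ‖mulVecE G v‖ ≤ opNorm G * ‖v‖ := by
  rw [mulVecE_eq]; exact (Matrix.toEuclideanCLM (𝕜 := ℝ) G).le_opNorm v

lemma mulVecE_mul {n : ℕ} (A B : Matrix (Fin n) (Fin n) ℝ) (v : EuclideanSpace ℝ (Fin n)) :
    mulVecE A (mulVecE B v) = mulVecE (A * B) v := by
  simp [mulVecE, Matrix.mulVec_mulVec]

lemma mulVecE_one {n : ℕ} (v : EuclideanSpace ℝ (Fin n)) : mulVecE 1 v = v := by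
  simp [mulVecE]


/-- Fixed-point property and boundedness of the minimal robust positively invariant set. -/
theorem minimal_rpi_fixed_point
    (n : ℕ) (F : Matrix (Fin n) (Fin n) ℝ)
    (C r : ℝ) (hC : 1 ≤ C) (hr : r ∈ Set.Ioo (0 : ℝ) 1)
    (hF : ∀ k : ℕ, opNorm (F ^ k) ≤ C * r ^ k)
    (Ω₁ : Set (EuclideanSpace ℝ (Fin n)))
    (hne : Ω₁.Nonempty) (hbd : Bornology.IsBounded Ω₁)
    (Ωinf : Set (EuclideanSpace ℝ (Fin n)))
    (hΩinf : Ωinf = {x | ∃ w : ℕ → EuclideanSpace ℝ (Fin n),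
      (∀ k, w k ∈ Ω₁) ∧ HasSum (fun k => mulVecE (F ^ k) (w k)) x}) :
    Ωinf.Nonempty ∧ Bornology.IsBounded Ωinf ∧
      (fun v => mulVecE F v) '' Ωinf + Ω₁ = Ωinf := by
  obtain ⟨M, hM⟩ := hbd.exists_norm_le
  obtain ⟨hr0, hr1⟩ := hr
  have hM0 : 0 ≤ M := le_trans (norm_nonneg _) (hM hne.choose hne.choose_spec)
  -- norm bound on terms
  have hterm : ∀ (w : ℕ → EuclideanSpace ℝ (Fin n)), (∀ k, w k ∈ Ω₁) →
      ∀ k, ‖mulVecE (F ^ k) (w k)‖ ≤ (C * M) * r ^ k := by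
    intro w hw k
    calc ‖mulVecE (F ^ k) (w k)‖ ≤ opNorm (F ^ k) * ‖w k‖ := norm_mulVecE_le _ _
    _ ≤ (C * r ^ k) * M := by
        apply mul_le_mul (hF k) (hM _ (hw k)) (norm_nonneg _)
        positivity
    _ = (C * M) * r ^ k := by ring
  have hgeo : Summable (fun k : ℕ => (C * M) * r ^ k) :=
    (summable_geometric_of_lt_one hr0.le hr1).mul_left _
  have hsummable : ∀ (w : ℕ → EuclideanSpace ℝ (Fin n)), (∀ k, w k ∈ Ω₁) →
      Summable (fun k => mulVecE (F ^ k) (w k)) := fun w hw =>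
    Summable.of_norm_bounded hgeo (hterm w hw)
  constructor
  · obtain ⟨a, ha⟩ := hne
    refine ⟨∑' k, mulVecE (F ^ k) a, ?_⟩
    rw [hΩinf]
    exact ⟨fun _ => a, fun _ => ha, (hsummable _ fun _ => ha).hasSum⟩
  constructor
  · rw [isBounded_iff_forall_norm_le]
    refine ⟨(C * M) * (1 - r)⁻¹, ?_⟩
    intro x hx
    rw [hΩinf] at hx
    obtain ⟨w, hw, hs⟩ := hx
    rw [hs.tsum_eq.symm]
    calc ‖∑' k, mulVecE (F ^ k) (w k)‖ ≤ ∑' k, (C * M) * r ^ k :=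
      tsum_of_norm_bounded hgeo.hasSum (hterm w hw)
    _ = (C * M) * (1 - r)⁻¹ := by
        rw [tsum_mul_left, tsum_geometric_of_lt_one hr0.le hr1]
  · ext x
    constructor
    · intro hx
      rw [Set.mem_add] at hx
      obtain ⟨u, hu, w0, hw0, hxe⟩ := hx
      obtain ⟨y, hy, rfl⟩ := hu
      subst hxe
      rw [hΩinf] at hy ⊢
      obtain ⟨w, hw, hs⟩ := hy
      refine ⟨fun k => Nat.rec w0 (fun k _ => w k) k, fun k => by cases k <;> simp [hw0, hw], ?_⟩
      have h1 : HasSum (fun k => mulVecE (F ^ (k + 1)) (w k)) (mulVecE F y) := by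
        have := (Matrix.toEuclideanCLM (𝕜 := ℝ) F).hasSum hs
        simpa [← mulVecE_eq, mulVecE_mul, ← pow_succ'] using this
      have := (hasSum_nat_add_iff (f := fun k => mulVecE (F ^ (k : ℕ)) (Nat.rec w0 (fun k _ => w k) k)) 1).mp (by simpa using h1)
      simpa [mulVecE_one] using this
    · intro hx
      rw [hΩinf] at hx
      obtain ⟨w, hw, hs⟩ := hx
      set y := ∑' k, mulVecE (F ^ k) (w (k + 1)) with hy
      have hsy : HasSum (fun k => mulVecE (F ^ k) (w (k + 1))) y :=
        (hsummable _ fun k => hw (k + 1)).hasSum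
      have h1 : HasSum (fun k => mulVecE (F ^ (k + 1)) (w (k + 1))) (mulVecE F y) := by
        have := (Matrix.toEuclideanCLM (𝕜 := ℝ) F).hasSum hsy
        simpa [← mulVecE_eq, mulVecE_mul, ← pow_succ'] using this
      have h2 := (hasSum_nat_add_iff (f := fun k => mulVecE (F ^ k) (w k)) 1).mp h1
      have hx_eq : x = mulVecE F y + w 0 := by
        have := hs.unique h2
        simpa [mulVecE_one] using this
      rw [Set.mem_add]
      refine ⟨mulVecE F y, ⟨y, ?_, rfl⟩, w 0, hw 0, hx_eq.symm⟩
      rw [hΩinf]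
      exact ⟨fun k => w (k + 1), fun k => hw (k + 1), hsy⟩
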